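/- For all complex n×n matrices A, B, M and N, the Liouvillians satisfy the commutation relation [L(A, M), L(B, N)] = L([A, B], AN + NA† − BM − MB†), where [A,B] = AB − BA is the matrix commutator and [X,Y] = XY − YX is the commutator of linear maps on End(F). -/

import Mathlib

open scoped Matrix

open ContinuousLinearMap in
/-- `Lhat c A ρ = Σ_{j,k} A j k • (c k * ρ * (c j)†)`. -/
noncomputable def Lhat {F : Type*} [NormedAddCommGroup F] [InnerProductSpace ℂ F]
    [FiniteDimensional ℂ F] {n : ℕ} (c : Fin n → F →L[ℂ] F)
    (A : Matrix (Fin n) (Fin n) ℂ) : (F →L[ℂ] F) →L[ℂ] (F →L[ℂ] F) :=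
  ∑ j, ∑ k, A j k • mulLeftRight ℂ (F →L[ℂ] F) (c k) (adjoint (c j))

open ContinuousLinearMap in
/-- `Ghat c A ρ = Σ_{j,k} A j k • ((c j)† * ρ * c k)`. -/
noncomputable def Ghat {F : Type*} [NormedAddCommGroup F] [InnerProductSpace ℂ F]
    [FiniteDimensional ℂ F] {n : ℕ} (c : Fin n → F →L[ℂ] F)
    (A : Matrix (Fin n) (Fin n) ℂ) : (F →L[ℂ] F) →L[ℂ] (F →L[ℂ] F) :=
  ∑ j, ∑ k, A j k • mulLeftRight ℂ (F →L[ℂ] F) (adjoint (c j)) (c k)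

open ContinuousLinearMap in
/-- The quadratic form `(c, A c) = Σ_{j,k} A j k • ((c j)† * c k)`. -/
noncomputable def quadOp {F : Type*} [NormedAddCommGroup F] [InnerProductSpace ℂ F]
    [FiniteDimensional ℂ F] {n : ℕ} (c : Fin n → F →L[ℂ] F)
    (A : Matrix (Fin n) (Fin n) ℂ) : F →L[ℂ] F :=
  ∑ j, ∑ k, A j k • (adjoint (c j) * c k)

open ContinuousLinearMap in
/-- `Fhat c A ρ = (c, A c) * ρ`. -/
noncomputable def Fhat {F : Type*} [NormedAddCommGroup F] [InnerProductSpace ℂ F]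
    [FiniteDimensional ℂ F] {n : ℕ} (c : Fin n → F →L[ℂ] F)
    (A : Matrix (Fin n) (Fin n) ℂ) : (F →L[ℂ] F) →L[ℂ] (F →L[ℂ] F) :=
  mul ℂ (F →L[ℂ] F) (quadOp c A)

open ContinuousLinearMap in
/-- `Bhat c A ρ = ρ * (c, A c)`. -/
noncomputable def Bhat {F : Type*} [NormedAddCommGroup F] [InnerProductSpace ℂ F]
    [FiniteDimensional ℂ F] {n : ℕ} (c : Fin n → F →L[ℂ] F)
    (A : Matrix (Fin n) (Fin n) ℂ) : (F →L[ℂ] F) →L[ℂ] (F →L[ℂ] F) :=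
  mulLeftRight ℂ (F →L[ℂ] F) 1 (quadOp c A)

/-- The Liouvillian
`L(A, M) = L̂(−A − A† − M) + Ĝ(M) + F̂(A + M) + B̂(A† + M) − (tr M)·id`. -/
noncomputable def Liou {F : Type*} [NormedAddCommGroup F] [InnerProductSpace ℂ F]
    [FiniteDimensional ℂ F] {n : ℕ} (c : Fin n → F →L[ℂ] F)
    (A M : Matrix (Fin n) (Fin n) ℂ) : (F →L[ℂ] F) →L[ℂ] (F →L[ℂ] F) :=
  Lhat c (-A - Aᴴ - M) + Ghat c M + Fhat c (A + M) + Bhat c (Aᴴ + M)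
    - M.trace • (1 : (F →L[ℂ] F) →L[ℂ] (F →L[ℂ] F))

set_option synthInstance.maxHeartbeats 400000
set_option maxHeartbeats 1000000

section Stmt3Aux
open ContinuousLinearMap

variable {F : Type*} [NormedAddCommGroup F] [InnerProductSpace ℂ F] [FiniteDimensional ℂ F]

local notation "𝒮" => (F →L[ℂ] F) →L[ℂ] (F →L[ℂ] F)

noncomputable def El (x : F →L[ℂ] F) : 𝒮 := mulLeftRight ℂ (F →L[ℂ] F) x 1
noncomputable def Er (x : F →L[ℂ] F) : 𝒮 := mulLeftRight ℂ (F →L[ℂ] F) 1 x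

@[simp] lemma El_apply (x ρ : F →L[ℂ] F) : El x ρ = x * ρ := by
  simp [El, mulLeftRight_apply]
@[simp] lemma Er_apply (x ρ : F →L[ℂ] F) : Er x ρ = ρ * x := by
  simp [Er, mulLeftRight_apply]

lemma El_mul (x y : F →L[ℂ] F) : El (x * y) = El x * El y := by
  ext ρ; simp [ContinuousLinearMap.mul_apply, mul_assoc]
lemma Er_mul (x y : F →L[ℂ] F) : Er (x * y) = Er y * Er x := by
  ext ρ; simp [ContinuousLinearMap.mul_apply, mul_assoc]
lemma El_sub (x y : F →L[ℂ] F) : El (x - y) = El x - El y := by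
  ext ρ; simp [sub_mul]
lemma El_neg (x : F →L[ℂ] F) : El (-x) = -El x := by
  ext ρ; simp [neg_mul]
lemma Er_sub (x y : F →L[ℂ] F) : Er (x - y) = Er x - Er y := by
  ext ρ; simp [mul_sub]
lemma Er_neg (x : F →L[ℂ] F) : Er (-x) = -Er x := by
  ext ρ; simp [mul_neg]
@[simp] lemma El_one' : El (1 : F →L[ℂ] F) = 1 := by ext ρ; simp
@[simp] lemma El_zero' : El (0 : F →L[ℂ] F) = 0 := by ext ρ; simp
@[simp] lemma Er_one' : Er (1 : F →L[ℂ] F) = 1 := by ext ρ; simp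
@[simp] lemma Er_zero' : Er (0 : F →L[ℂ] F) = 0 := by ext ρ; simp

lemma ElEr_comm (x y : F →L[ℂ] F) : El x * Er y = Er y * El x := by
  ext ρ; simp [ContinuousLinearMap.mul_apply, mul_assoc]
lemma MLR_eq (x y : F →L[ℂ] F) :
    mulLeftRight ℂ (F →L[ℂ] F) x y = El x * Er y := by
  ext ρ; simp [ContinuousLinearMap.mul_apply, mulLeftRight_apply, mul_assoc]

variable {n : ℕ} (c : Fin n → F →L[ℂ] F)

section Rel

lemma Rll (hcc : ∀ j k, c j * c k + c k * c j = 0) (j k : Fin n) :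
    El (c j) * El (c k) = -(El (c k) * El (c j)) := by
  rw [← El_mul, ← El_mul, eq_neg_of_add_eq_zero_left (hcc j k), El_neg]

lemma Rdd (hdd : ∀ j k, ContinuousLinearMap.adjoint (c j) * ContinuousLinearMap.adjoint (c k)
      + ContinuousLinearMap.adjoint (c k) * ContinuousLinearMap.adjoint (c j) = 0)
    (j k : Fin n) : El (adjoint (c j)) * El (adjoint (c k))
    = -(El (adjoint (c k)) * El (adjoint (c j))) := by
  rw [← El_mul, ← El_mul, eq_neg_of_add_eq_zero_left (hdd j k), El_neg]

lemma Rld (hcd : ∀ j k, c j * ContinuousLinearMap.adjoint (c k)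
      + ContinuousLinearMap.adjoint (c k) * c j = if j = k then 1 else 0) (j k : Fin n) :
    El (c j) * El (adjoint (c k))
    = (if j = k then (1 : 𝒮) else 0) - El (adjoint (c k)) * El (c j) := by
  rw [← El_mul, ← El_mul, eq_sub_of_add_eq (hcd j k), El_sub, apply_ite El, El_one', El_zero']

lemma Rdl (hcd : ∀ j k, c j * ContinuousLinearMap.adjoint (c k)
      + ContinuousLinearMap.adjoint (c k) * c j = if j = k then 1 else 0) (j k : Fin n) :
    El (adjoint (c j)) * El (c k)
    = (if j = k then (1 : 𝒮) else 0) - El (c k) * El (adjoint (c j)) := by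
  rw [← El_mul, ← El_mul, eq_sub_of_add_eq' (hcd k j), El_sub, apply_ite El, El_one', El_zero']
  simp_rw [eq_comm (a := k) (b := j)]

lemma Rrr (hcc : ∀ j k, c j * c k + c k * c j = 0) (j k : Fin n) :
    Er (c j) * Er (c k) = -(Er (c k) * Er (c j)) := by
  rw [show Er (c j) * Er (c k) = Er (c k * c j) from (Er_mul _ _).symm,
    show Er (c k) * Er (c j) = Er (c j * c k) from (Er_mul _ _).symm,
    eq_neg_of_add_eq_zero_right (hcc j k), Er_neg]

lemma Rss (hdd : ∀ j k, ContinuousLinearMap.adjoint (c j) * ContinuousLinearMap.adjoint (c k)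
      + ContinuousLinearMap.adjoint (c k) * ContinuousLinearMap.adjoint (c j) = 0)
    (j k : Fin n) : Er (adjoint (c j)) * Er (adjoint (c k))
    = -(Er (adjoint (c k)) * Er (adjoint (c j))) := by
  rw [show Er (adjoint (c j)) * Er (adjoint (c k)) = Er (adjoint (c k) * adjoint (c j)) from
      (Er_mul _ _).symm,
    show Er (adjoint (c k)) * Er (adjoint (c j)) = Er (adjoint (c j) * adjoint (c k)) from
      (Er_mul _ _).symm,
    eq_neg_of_add_eq_zero_right (hdd j k), Er_neg]

lemma Rrs (hcd : ∀ j k, c j * ContinuousLinearMap.adjoint (c k)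
      + ContinuousLinearMap.adjoint (c k) * c j = if j = k then 1 else 0) (j k : Fin n) :
    Er (c j) * Er (adjoint (c k))
    = (if j = k then (1 : 𝒮) else 0) - Er (adjoint (c k)) * Er (c j) := by
  rw [show Er (c j) * Er (adjoint (c k)) = Er (adjoint (c k) * c j) from (Er_mul _ _).symm,
    show Er (adjoint (c k)) * Er (c j) = Er (c j * adjoint (c k)) from (Er_mul _ _).symm,
    eq_sub_of_add_eq' (hcd j k), Er_sub, apply_ite Er, Er_one', Er_zero']

lemma Rsr (hcd : ∀ j k, c j * ContinuousLinearMap.adjoint (c k)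
      + ContinuousLinearMap.adjoint (c k) * c j = if j = k then 1 else 0) (j k : Fin n) :
    Er (adjoint (c j)) * Er (c k)
    = (if j = k then (1 : 𝒮) else 0) - Er (c k) * Er (adjoint (c j)) := by
  rw [show Er (adjoint (c j)) * Er (c k) = Er (c k * adjoint (c j)) from (Er_mul _ _).symm,
    show Er (c k) * Er (adjoint (c j)) = Er (adjoint (c j) * c k) from (Er_mul _ _).symm,
    eq_sub_of_add_eq (hcd k j), Er_sub, apply_ite Er, Er_one', Er_zero']
  simp_rw [eq_comm (a := k) (b := j)]

end Rel

lemma Lhat_eq (A : Matrix (Fin n) (Fin n) ℂ) :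
    Lhat c A = ∑ j, ∑ k, A j k • (El (c k) * Er (adjoint (c j))) := by
  simp only [Lhat, MLR_eq]

lemma Ghat_eq (A : Matrix (Fin n) (Fin n) ℂ) :
    Ghat c A = ∑ j, ∑ k, A j k • (El (adjoint (c j)) * Er (c k)) := by
  simp only [Ghat, MLR_eq]

lemma Fhat_eq (A : Matrix (Fin n) (Fin n) ℂ) :
    Fhat c A = ∑ j, ∑ k, A j k • (El (adjoint (c j)) * El (c k)) := by
  ext ρ
  simp only [Fhat, quadOp, ContinuousLinearMap.mul_apply', ContinuousLinearMap.sum_apply,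
    ContinuousLinearMap.smul_apply, ContinuousLinearMap.mul_apply, El_apply,
    Finset.sum_mul, smul_mul_assoc, mul_assoc]

lemma Bhat_eq (A : Matrix (Fin n) (Fin n) ℂ) :
    Bhat c A = ∑ j, ∑ k, A j k • (Er (c k) * Er (adjoint (c j))) := by
  ext ρ
  simp only [Bhat, quadOp, mulLeftRight_apply, one_mul, ContinuousLinearMap.sum_apply,
    ContinuousLinearMap.smul_apply, ContinuousLinearMap.mul_apply, Er_apply,
    Finset.mul_sum, mul_smul_comm, mul_assoc]


section Templates
variable {R : Type*} [Ring R]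

lemma tmplT1 {a b u v z w : R}
    (hza : a * z = z * a) (hwu : u * w = w * u)
    (hbu : b * u = z - u * b) (hva : v * a = w - a * v)
    (hau : a * u = -(u * a)) (hvb : v * b = -(b * v)) :
    a * b * (u * v) - u * v * (a * b) = z * (a * v) - w * (u * b) := by
  have hbu' : ∀ x, b * (u * x) = z * x - u * (b * x) := fun x => by
    rw [← mul_assoc, hbu, sub_mul, mul_assoc]
  have hva' : ∀ x, v * (a * x) = w * x - a * (v * x) := fun x => by
    rw [← mul_assoc, hva, sub_mul, mul_assoc]
  have hau' : ∀ x, a * (u * x) = -(u * (a * x)) := fun x => by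
    rw [← mul_assoc, hau, neg_mul, mul_assoc]
  calc a * b * (u * v) - u * v * (a * b)
      = a * (b * (u * v)) - u * (v * (a * b)) := by simp only [mul_assoc]
    _ = (a * (z * v) - a * (u * (b * v))) - (u * (w * b) - u * (a * (v * b))) := by
        rw [hbu' v, hva' b, mul_sub, mul_sub]
    _ = (a * (z * v) + u * (a * (b * v))) - (u * (w * b) + u * (a * (b * v))) := by
        rw [hau' (b * v), hvb, mul_neg, mul_neg, sub_neg_eq_add, sub_neg_eq_add]
    _ = a * (z * v) - u * (w * b) := by abel
    _ = z * (a * v) - w * (u * b) := by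
        rw [← mul_assoc a z v, hza, mul_assoc z a v, ← mul_assoc u w b, hwu, mul_assoc w u b]

lemma tmplT2 {a b u v : R}
    (hau : a * u = u * a) (hav : a * v = v * a)
    (hbu : b * u = u * b) (hbv : b * v = v * b) :
    a * b * (u * v) - u * v * (a * b) = 0 := by
  have hbu' : ∀ x, b * (u * x) = u * (b * x) := fun x => by
    rw [← mul_assoc, hbu, mul_assoc]
  have hau' : ∀ x, a * (u * x) = u * (a * x) := fun x => by
    rw [← mul_assoc, hau, mul_assoc]
  have hav' : ∀ x, a * (v * x) = v * (a * x) := fun x => by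
    rw [← mul_assoc, hav, mul_assoc]
  rw [sub_eq_zero]
  calc a * b * (u * v) = a * (b * (u * v)) := by rw [mul_assoc]
    _ = a * (u * (b * v)) := by rw [hbu' v]
    _ = u * (a * (b * v)) := by rw [hau' (b * v)]
    _ = u * (a * (v * b)) := by rw [hbv]
    _ = u * (v * (a * b)) := by rw [hav' b]
    _ = u * v * (a * b) := by rw [mul_assoc]

lemma tmplT3 {a b u v z : R}
    (hbu : b * u = -(u * b)) (hau : a * u = z - u * a)
    (hav : a * v = v * a) (hbv : b * v = v * b) :
    a * b * (u * v) - u * v * (a * b) = -(z * (b * v)) := by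
  have hbu' : ∀ x, b * (u * x) = -(u * (b * x)) := fun x => by
    rw [← mul_assoc, hbu, neg_mul, mul_assoc]
  have hau' : ∀ x, a * (u * x) = z * x - u * (a * x) := fun x => by
    rw [← mul_assoc, hau, sub_mul, mul_assoc]
  have hav' : ∀ x, a * (v * x) = v * (a * x) := fun x => by
    rw [← mul_assoc, hav, mul_assoc]
  calc a * b * (u * v) - u * v * (a * b)
      = a * (b * (u * v)) - u * (v * (a * b)) := by simp only [mul_assoc]
    _ = -(a * (u * (b * v))) - u * (v * (a * b)) := by rw [hbu' v, mul_neg]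
    _ = -(z * (b * v) - u * (a * (b * v))) - u * (v * (a * b)) := by rw [hau' (b * v)]
    _ = -(z * (b * v) - u * (a * (b * v))) - u * (a * (v * b)) := by rw [hav' b]
    _ = -(z * (b * v) - u * (a * (b * v))) - u * (a * (b * v)) := by rw [hbv]
    _ = -(z * (b * v)) := by abel

lemma tmplT4 {a b u v z : R}
    (hza : a * z = z * a)
    (hbu : b * u = z - u * b) (hau : a * u = -(u * a))
    (hav : a * v = v * a) (hbv : b * v = v * b) :
    a * b * (u * v) - u * v * (a * b) = z * (a * v) := by
  have hbu' : ∀ x, b * (u * x) = z * x - u * (b * x) := fun x => by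
    rw [← mul_assoc, hbu, sub_mul, mul_assoc]
  have hau' : ∀ x, a * (u * x) = -(u * (a * x)) := fun x => by
    rw [← mul_assoc, hau, neg_mul, mul_assoc]
  have hav' : ∀ x, a * (v * x) = v * (a * x) := fun x => by
    rw [← mul_assoc, hav, mul_assoc]
  calc a * b * (u * v) - u * v * (a * b)
      = a * (b * (u * v)) - u * (v * (a * b)) := by simp only [mul_assoc]
    _ = a * (z * v) - a * (u * (b * v)) - u * (v * (a * b)) := by rw [hbu' v, mul_sub]
    _ = a * (z * v) + u * (a * (b * v)) - u * (v * (a * b)) := by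
        rw [hau' (b * v)]; abel
    _ = a * (z * v) + u * (a * (b * v)) - u * (a * (v * b)) := by rw [hav' b]
    _ = a * (z * v) + u * (a * (b * v)) - u * (a * (b * v)) := by rw [hbv]
    _ = a * (z * v) := by abel
    _ = z * (a * v) := by rw [← mul_assoc a z v, hza, mul_assoc z a v]

lemma tmplT5 {a b u v z : R}
    (hzu : u * z = z * u)
    (hbu : b * u = u * b) (hau : a * u = u * a)
    (hbv : b * v = -(v * b)) (hav : a * v = z - v * a) :
    a * b * (u * v) - u * v * (a * b) = -(z * (u * b)) := by
  have hbu' : ∀ x, b * (u * x) = u * (b * x) := fun x => by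
    rw [← mul_assoc, hbu, mul_assoc]
  have hau' : ∀ x, a * (u * x) = u * (a * x) := fun x => by
    rw [← mul_assoc, hau, mul_assoc]
  have hav' : ∀ x, a * (v * x) = z * x - v * (a * x) := fun x => by
    rw [← mul_assoc, hav, sub_mul, mul_assoc]
  calc a * b * (u * v) - u * v * (a * b)
      = a * (b * (u * v)) - u * (v * (a * b)) := by simp only [mul_assoc]
    _ = a * (u * (b * v)) - u * (v * (a * b)) := by rw [hbu' v]
    _ = u * (a * (b * v)) - u * (v * (a * b)) := by rw [hau' (b * v)]
    _ = u * (a * (-(v * b))) - u * (v * (a * b)) := by rw [hbv]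
    _ = -(u * (a * (v * b))) - u * (v * (a * b)) := by rw [mul_neg, mul_neg]
    _ = -(u * (z * b - v * (a * b))) - u * (v * (a * b)) := by rw [hav' b]
    _ = -(u * (z * b)) := by rw [mul_sub]; abel
    _ = -(z * (u * b)) := by rw [← mul_assoc, hzu, mul_assoc]

lemma tmplT6 {a b u v z : R}
    (hzu : u * z = z * u) (hza : a * z = z * a)
    (hbu : b * u = u * b) (hau : a * u = u * a)
    (hbv : b * v = z - v * b) (hav : a * v = -(v * a)) :
    a * b * (u * v) - u * v * (a * b) = z * (u * a) := by
  have hbu' : ∀ x, b * (u * x) = u * (b * x) := fun x => by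
    rw [← mul_assoc, hbu, mul_assoc]
  have hau' : ∀ x, a * (u * x) = u * (a * x) := fun x => by
    rw [← mul_assoc, hau, mul_assoc]
  have hav' : ∀ x, a * (v * x) = -(v * (a * x)) := fun x => by
    rw [← mul_assoc, hav, neg_mul, mul_assoc]
  calc a * b * (u * v) - u * v * (a * b)
      = a * (b * (u * v)) - u * (v * (a * b)) := by simp only [mul_assoc]
    _ = u * (a * (b * v)) - u * (v * (a * b)) := by rw [hbu' v, hau' (b * v)]
    _ = u * (a * (z - v * b)) - u * (v * (a * b)) := by rw [hbv]
    _ = u * (a * z) - u * (a * (v * b)) - u * (v * (a * b)) := by rw [mul_sub, mul_sub]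
    _ = u * (a * z) + u * (v * (a * b)) - u * (v * (a * b)) := by
        rw [hav' b, mul_neg]; abel
    _ = u * (a * z) := by abel
    _ = z * (u * a) := by rw [hza, ← mul_assoc u z a, hzu, mul_assoc z u a]

lemma tmplT7 {a b u v : R}
    (hbu : b * u = u * b) (hav : a * v = v * a)
    (hau : a * u = -(u * a)) (hbv : b * v = -(v * b)) :
    a * b * (u * v) - u * v * (a * b) = 0 := by
  have hbu' : ∀ x, b * (u * x) = u * (b * x) := fun x => by
    rw [← mul_assoc, hbu, mul_assoc]
  have hau' : ∀ x, a * (u * x) = -(u * (a * x)) := fun x => by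
    rw [← mul_assoc, hau, neg_mul, mul_assoc]
  have hav' : ∀ x, a * (v * x) = v * (a * x) := fun x => by
    rw [← mul_assoc, hav, mul_assoc]
  rw [sub_eq_zero]
  calc a * b * (u * v) = a * (b * (u * v)) := by rw [mul_assoc]
    _ = a * (u * (b * v)) := by rw [hbu' v]
    _ = -(u * (a * (b * v))) := by rw [hau' (b * v)]
    _ = -(u * (a * (-(v * b)))) := by rw [hbv]
    _ = u * (a * (v * b)) := by rw [mul_neg, mul_neg, neg_neg]
    _ = u * (v * (a * b)) := by rw [hav' b]
    _ = u * v * (a * b) := by rw [mul_assoc]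

lemma tmplT8 {a b u v z w : R}
    (hwa : a * w = w * a) (hwu : u * w = w * u)
    (hbu : b * u = u * b) (hav : a * v = v * a)
    (hau : a * u = z - u * a) (hbv : b * v = w - v * b) :
    a * b * (u * v) - u * v * (a * b) = z * w - z * (v * b) - w * (u * a) := by
  have hbu' : ∀ x, b * (u * x) = u * (b * x) := fun x => by
    rw [← mul_assoc, hbu, mul_assoc]
  have hau' : ∀ x, a * (u * x) = z * x - u * (a * x) := fun x => by
    rw [← mul_assoc, hau, sub_mul, mul_assoc]
  have hav' : ∀ x, a * (v * x) = v * (a * x) := fun x => by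
    rw [← mul_assoc, hav, mul_assoc]
  calc a * b * (u * v) - u * v * (a * b)
      = a * (b * (u * v)) - u * (v * (a * b)) := by simp only [mul_assoc]
    _ = z * (b * v) - u * (a * (b * v)) - u * (v * (a * b)) := by rw [hbu' v, hau' (b * v)]
    _ = z * w - z * (v * b) - w * (u * a) := by
        rw [hbv, mul_sub z w (v * b), mul_sub a w (v * b), mul_sub, hwa, hav' b,
          ← mul_assoc u w a, hwu, mul_assoc w u a]
        abel

end Templates


lemma mul_ite_comm {R : Type*} [Ring R] (P : Prop) [Decidable P] (x : R) :
    x * (if P then (1 : R) else 0) = (if P then (1 : R) else 0) * x := by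
  split_ifs <;> simp

section Sums
variable {n : ℕ}

lemma sum4_swap {S : Type*} [AddCommMonoid S] (h : Fin n → Fin n → Fin n → Fin n → S) :
    (∑ j, ∑ k, ∑ p, ∑ q, h j k p q) = ∑ j, ∑ k, ∑ p, ∑ q, h p q j k := by
  calc (∑ j, ∑ k, ∑ p, ∑ q, h j k p q)
      = ∑ j, ∑ p, ∑ k, ∑ q, h j k p q :=
        Finset.sum_congr rfl fun j _ => Finset.sum_comm
    _ = ∑ p, ∑ j, ∑ k, ∑ q, h j k p q := Finset.sum_comm
    _ = ∑ p, ∑ j, ∑ q, ∑ k, h j k p q :=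
        Finset.sum_congr rfl fun p _ => Finset.sum_congr rfl fun j _ => Finset.sum_comm
    _ = ∑ p, ∑ q, ∑ j, ∑ k, h j k p q :=
        Finset.sum_congr rfl fun p _ => Finset.sum_comm

lemma quad_mul {S : Type*} [Ring S] [Algebra ℂ S] (f g : Fin n → Fin n → S)
    (A B : Matrix (Fin n) (Fin n) ℂ) :
    (∑ j, ∑ k, A j k • f j k) * (∑ j, ∑ k, B j k • g j k)
      = ∑ j, ∑ k, ∑ p, ∑ q, (A j k * B p q) • (f j k * g p q) := by
  simp only [Finset.sum_mul, Finset.mul_sum, Finset.smul_sum, smul_mul_assoc, mul_smul_comm,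
    smul_smul]
  rw [sum4_swap (fun a b c d => (B a b * A c d) • (f c d * g a b))]
  exact Finset.sum_congr rfl fun j _ => Finset.sum_congr rfl fun k _ =>
    Finset.sum_congr rfl fun p _ => Finset.sum_congr rfl fun q _ => by
      rw [mul_comm (B p q) (A j k)]

lemma comm_expand {S : Type*} [Ring S] [Algebra ℂ S] (f g : Fin n → Fin n → S)
    (A B : Matrix (Fin n) (Fin n) ℂ) :
    (∑ j, ∑ k, A j k • f j k) * (∑ j, ∑ k, B j k • g j k)
      - (∑ j, ∑ k, B j k • g j k) * (∑ j, ∑ k, A j k • f j k)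
      = ∑ j, ∑ k, ∑ p, ∑ q, (A j k * B p q) • (f j k * g p q - g p q * f j k) := by
  rw [quad_mul, quad_mul, sum4_swap (fun j k p q => (B j k * A p q) • (g j k * f p q))]
  simp only [← Finset.sum_sub_distrib]
  refine Finset.sum_congr rfl fun j _ => Finset.sum_congr rfl fun k _ =>
    Finset.sum_congr rfl fun p _ => Finset.sum_congr rfl fun q _ => ?_
  rw [smul_sub, mul_comm (B p q) (A j k)]

lemma collapse1 {S : Type*} [Ring S] [Module ℂ S] (A B : Matrix (Fin n) (Fin n) ℂ)
    (x : Fin n → Fin n → S) :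
    (∑ j, ∑ k, ∑ p, ∑ q, (A j k * B p q) • ((if k = p then (1 : S) else 0) * x j q))
      = ∑ j, ∑ q, (A * B) j q • x j q := by
  simp only [ite_mul, one_mul, zero_mul, smul_ite, smul_zero]
  refine Finset.sum_congr rfl fun j _ => ?_
  calc (∑ k, ∑ p, ∑ q, if k = p then (A j k * B p q) • x j q else 0)
      = ∑ k, ∑ q, (A j k * B k q) • x j q := by
        refine Finset.sum_congr rfl fun k _ => ?_
        rw [Finset.sum_comm]
        refine Finset.sum_congr rfl fun q _ => ?_
        simp
    _ = ∑ q, ∑ k, (A j k * B k q) • x j q := Finset.sum_comm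
    _ = ∑ q, (A * B) j q • x j q := by
        refine Finset.sum_congr rfl fun q _ => ?_
        rw [Matrix.mul_apply, Finset.sum_smul]

lemma collapse2 {S : Type*} [Ring S] [Module ℂ S] (A B : Matrix (Fin n) (Fin n) ℂ)
    (x : Fin n → Fin n → S) :
    (∑ j, ∑ k, ∑ p, ∑ q, (A j k * B p q) • ((if q = j then (1 : S) else 0) * x p k))
      = ∑ p, ∑ k, (B * A) p k • x p k := by
  simp only [ite_mul, one_mul, zero_mul, smul_ite, smul_zero]
  calc (∑ j, ∑ k, ∑ p, ∑ q, if q = j then (A j k * B p q) • x p k else 0)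
      = ∑ j, ∑ k, ∑ p, (A j k * B p j) • x p k := by
        refine Finset.sum_congr rfl fun j _ => Finset.sum_congr rfl fun k _ =>
          Finset.sum_congr rfl fun p _ => ?_
        simp
    _ = ∑ k, ∑ j, ∑ p, (A j k * B p j) • x p k := Finset.sum_comm
    _ = ∑ k, ∑ p, ∑ j, (A j k * B p j) • x p k :=
        Finset.sum_congr rfl fun k _ => Finset.sum_comm
    _ = ∑ p, ∑ k, ∑ j, (A j k * B p j) • x p k := Finset.sum_comm
    _ = ∑ p, ∑ k, (B * A) p k • x p k := by
        refine Finset.sum_congr rfl fun p _ => Finset.sum_congr rfl fun k _ => ?_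
        rw [Matrix.mul_apply, Finset.sum_smul]
        exact Finset.sum_congr rfl fun j _ => by rw [mul_comm (A j k) (B p j)]

lemma collapse3 {S : Type*} [Ring S] [Module ℂ S] (A B : Matrix (Fin n) (Fin n) ℂ) :
    (∑ j, ∑ k, ∑ p, ∑ q, (A j k * B p q) •
        ((if k = p then (1 : S) else 0) * (if q = j then (1 : S) else 0)))
      = (A * B).trace • (1 : S) := by
  simp only [ite_mul, one_mul, zero_mul, mul_ite, mul_one, mul_zero, smul_ite, smul_zero]
  calc (∑ j, ∑ k, ∑ p, ∑ q, if q = j then (if k = p then (A j k * B p q) • (1 : S) else 0) else 0)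
      = ∑ j, ∑ k, ∑ p, (if k = p then (A j k * B p j) • (1 : S) else 0) := by
        refine Finset.sum_congr rfl fun j _ => Finset.sum_congr rfl fun k _ =>
          Finset.sum_congr rfl fun p _ => ?_
        simp
    _ = ∑ j, ∑ k, (A j k * B k j) • (1 : S) := by
        refine Finset.sum_congr rfl fun j _ => Finset.sum_congr rfl fun k _ => ?_
        simp
    _ = (A * B).trace • (1 : S) := by
        rw [Matrix.trace, Finset.sum_smul]
        refine Finset.sum_congr rfl fun j _ => ?_
        rw [Matrix.diag_apply, Matrix.mul_apply, Finset.sum_smul]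

end Sums




set_option linter.unusedVariables false in
lemma iteswap (a b : Fin n) : (if a = b then (1:𝒮) else 0) = (if b = a then (1:𝒮) else 0) := by
  simp [eq_comm]

set_option maxHeartbeats 2000000 in
lemma commFF (hcc : ∀ j k, c j * c k + c k * c j = 0)
    (hcd : ∀ j k, c j * ContinuousLinearMap.adjoint (c k)
      + ContinuousLinearMap.adjoint (c k) * c j = if j = k then 1 else 0)
    (hdd : ∀ j k, ContinuousLinearMap.adjoint (c j) * ContinuousLinearMap.adjoint (c k)
      + ContinuousLinearMap.adjoint (c k) * ContinuousLinearMap.adjoint (c j) = 0)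
    (A B : Matrix (Fin n) (Fin n) ℂ) :
    Fhat c A * Fhat c B - Fhat c B * Fhat c A = Fhat c (A * B) - Fhat c (B * A) := by
  have e := comm_expand (fun j k => El (adjoint (c j)) * El (c k)) (fun j k => El (adjoint (c j)) * El (c k)) A B
  have e1 := collapse1 A B (fun j q => El (adjoint (c j)) * El (c q))
  have e2 := collapse2 A B (fun p k => El (adjoint (c p)) * El (c k))
  rw [Fhat_eq, Fhat_eq, e]
  have key : ∀ j k p q : Fin n,
      El (adjoint (c j)) * El (c k) * (El (adjoint (c p)) * El (c q))
        - El (adjoint (c p)) * El (c q) * (El (adjoint (c j)) * El (c k))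
      = (if k = p then (1:𝒮) else 0) * (El (adjoint (c j)) * El (c q))
        - (if q = j then (1:𝒮) else 0) * (El (adjoint (c p)) * El (c k)) :=
    fun j k p q => tmplT1 (mul_ite_comm _ _) (mul_ite_comm _ _) (Rld c hcd k p)
      (Rld c hcd q j) (Rdd c hdd j p) (Rll c hcc q k)
  simp only [key, smul_sub, Finset.sum_sub_distrib]
  rw [e1, e2, Fhat_eq c (A * B), Fhat_eq c (B * A)]

set_option maxHeartbeats 2000000 in
lemma commBB (hcc : ∀ j k, c j * c k + c k * c j = 0)
    (hcd : ∀ j k, c j * ContinuousLinearMap.adjoint (c k)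
      + ContinuousLinearMap.adjoint (c k) * c j = if j = k then 1 else 0)
    (hdd : ∀ j k, ContinuousLinearMap.adjoint (c j) * ContinuousLinearMap.adjoint (c k)
      + ContinuousLinearMap.adjoint (c k) * ContinuousLinearMap.adjoint (c j) = 0)
    (A B : Matrix (Fin n) (Fin n) ℂ) :
    Bhat c A * Bhat c B - Bhat c B * Bhat c A = Bhat c (B * A) - Bhat c (A * B) := by
  have e := comm_expand (fun j k => Er (c k) * Er (adjoint (c j))) (fun j k => Er (c k) * Er (adjoint (c j))) A B
  have e1 := collapse2 A B (fun p k => Er (c k) * Er (adjoint (c p)))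
  have e2 := collapse1 A B (fun j q => Er (c q) * Er (adjoint (c j)))
  rw [Bhat_eq, Bhat_eq, e]
  have key : ∀ j k p q : Fin n,
      Er (c k) * Er (adjoint (c j)) * (Er (c q) * Er (adjoint (c p)))
        - Er (c q) * Er (adjoint (c p)) * (Er (c k) * Er (adjoint (c j)))
      = (if q = j then (1:𝒮) else 0) * (Er (c k) * Er (adjoint (c p)))
        - (if k = p then (1:𝒮) else 0) * (Er (c q) * Er (adjoint (c j))) := by
    intro j k p q
    have h := tmplT1 (a := Er (c k)) (b := Er (adjoint (c j))) (u := Er (c q))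
      (v := Er (adjoint (c p))) (mul_ite_comm _ _) (mul_ite_comm _ _)
      (Rsr c hcd j q) (Rsr c hcd p k) (Rrr c hcc k q) (Rss c hdd p j)
    rwa [iteswap j q, iteswap p k] at h
  simp only [key, smul_sub, Finset.sum_sub_distrib]
  rw [e1, e2, Bhat_eq c (B * A), Bhat_eq c (A * B)]

set_option maxHeartbeats 2000000 in
lemma commFB (hcc : ∀ j k, c j * c k + c k * c j = 0)
    (hcd : ∀ j k, c j * ContinuousLinearMap.adjoint (c k)
      + ContinuousLinearMap.adjoint (c k) * c j = if j = k then 1 else 0)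
    (hdd : ∀ j k, ContinuousLinearMap.adjoint (c j) * ContinuousLinearMap.adjoint (c k)
      + ContinuousLinearMap.adjoint (c k) * ContinuousLinearMap.adjoint (c j) = 0)
    (A B : Matrix (Fin n) (Fin n) ℂ) :
    Fhat c A * Bhat c B - Bhat c B * Fhat c A = 0 := by
  have e := comm_expand (fun j k => El (adjoint (c j)) * El (c k)) (fun j k => Er (c k) * Er (adjoint (c j))) A B
  rw [Fhat_eq, Bhat_eq, e]
  have key : ∀ j k p q : Fin n,
      El (adjoint (c j)) * El (c k) * (Er (c q) * Er (adjoint (c p)))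
        - Er (c q) * Er (adjoint (c p)) * (El (adjoint (c j)) * El (c k)) = 0 :=
    fun j k p q => tmplT2 (ElEr_comm (adjoint (c j)) (c q)) (ElEr_comm (adjoint (c j)) (adjoint (c p)))
      (ElEr_comm (c k) (c q)) (ElEr_comm (c k) (adjoint (c p)))
  simp only [key, smul_zero, Finset.sum_const_zero]

set_option maxHeartbeats 2000000 in
lemma commFL (hcc : ∀ j k, c j * c k + c k * c j = 0)
    (hcd : ∀ j k, c j * ContinuousLinearMap.adjoint (c k)
      + ContinuousLinearMap.adjoint (c k) * c j = if j = k then 1 else 0)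
    (hdd : ∀ j k, ContinuousLinearMap.adjoint (c j) * ContinuousLinearMap.adjoint (c k)
      + ContinuousLinearMap.adjoint (c k) * ContinuousLinearMap.adjoint (c j) = 0)
    (A B : Matrix (Fin n) (Fin n) ℂ) :
    Fhat c A * Lhat c B - Lhat c B * Fhat c A = -Lhat c (B * A) := by
  have e := comm_expand (fun j k => El (adjoint (c j)) * El (c k)) (fun j k => El (c k) * Er (adjoint (c j))) A B
  have e2 := collapse2 A B (fun p k => El (c k) * Er (adjoint (c p)))
  rw [Fhat_eq, Lhat_eq, e]
  have key : ∀ j k p q : Fin n,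
      El (adjoint (c j)) * El (c k) * (El (c q) * Er (adjoint (c p)))
        - El (c q) * Er (adjoint (c p)) * (El (adjoint (c j)) * El (c k))
      = -((if q = j then (1:𝒮) else 0) * (El (c k) * Er (adjoint (c p)))) := by
    intro j k p q
    have h := tmplT3 (Rll c hcc k q) (Rdl c hcd j q) (ElEr_comm (adjoint (c j)) (adjoint (c p)))
      (ElEr_comm (c k) (adjoint (c p)))
    rwa [iteswap j q] at h
  simp only [key, smul_neg, Finset.sum_neg_distrib]
  rw [e2, Lhat_eq c (B * A)]

set_option maxHeartbeats 2000000 in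
lemma commFG (hcc : ∀ j k, c j * c k + c k * c j = 0)
    (hcd : ∀ j k, c j * ContinuousLinearMap.adjoint (c k)
      + ContinuousLinearMap.adjoint (c k) * c j = if j = k then 1 else 0)
    (hdd : ∀ j k, ContinuousLinearMap.adjoint (c j) * ContinuousLinearMap.adjoint (c k)
      + ContinuousLinearMap.adjoint (c k) * ContinuousLinearMap.adjoint (c j) = 0)
    (A B : Matrix (Fin n) (Fin n) ℂ) :
    Fhat c A * Ghat c B - Ghat c B * Fhat c A = Ghat c (A * B) := by
  have e := comm_expand (fun j k => El (adjoint (c j)) * El (c k)) (fun j k => El (adjoint (c j)) * Er (c k)) A B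
  have e1 := collapse1 A B (fun j q => El (adjoint (c j)) * Er (c q))
  rw [Fhat_eq, Ghat_eq, e]
  have key : ∀ j k p q : Fin n,
      El (adjoint (c j)) * El (c k) * (El (adjoint (c p)) * Er (c q))
        - El (adjoint (c p)) * Er (c q) * (El (adjoint (c j)) * El (c k))
      = (if k = p then (1:𝒮) else 0) * (El (adjoint (c j)) * Er (c q)) :=
    fun j k p q => tmplT4 (mul_ite_comm _ _) (Rld c hcd k p) (Rdd c hdd j p)
      (ElEr_comm (adjoint (c j)) (c q)) (ElEr_comm (c k) (c q))
  simp only [key]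
  rw [e1, Ghat_eq c (A * B)]

set_option maxHeartbeats 2000000 in
lemma commBL (hcc : ∀ j k, c j * c k + c k * c j = 0)
    (hcd : ∀ j k, c j * ContinuousLinearMap.adjoint (c k)
      + ContinuousLinearMap.adjoint (c k) * c j = if j = k then 1 else 0)
    (hdd : ∀ j k, ContinuousLinearMap.adjoint (c j) * ContinuousLinearMap.adjoint (c k)
      + ContinuousLinearMap.adjoint (c k) * ContinuousLinearMap.adjoint (c j) = 0)
    (A B : Matrix (Fin n) (Fin n) ℂ) :
    Bhat c A * Lhat c B - Lhat c B * Bhat c A = -Lhat c (A * B) := by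
  have e := comm_expand (fun j k => Er (c k) * Er (adjoint (c j))) (fun j k => El (c k) * Er (adjoint (c j))) A B
  have e1 := collapse1 A B (fun j q => El (c q) * Er (adjoint (c j)))
  rw [Bhat_eq, Lhat_eq, e]
  have key : ∀ j k p q : Fin n,
      Er (c k) * Er (adjoint (c j)) * (El (c q) * Er (adjoint (c p)))
        - El (c q) * Er (adjoint (c p)) * (Er (c k) * Er (adjoint (c j)))
      = -((if k = p then (1:𝒮) else 0) * (El (c q) * Er (adjoint (c j)))) :=
    fun j k p q => tmplT5 (mul_ite_comm _ _) ((ElEr_comm (c q) (adjoint (c j))).symm)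
      ((ElEr_comm (c q) (c k)).symm) (Rss c hdd j p) (Rrs c hcd k p)
  simp only [key, smul_neg, Finset.sum_neg_distrib]
  rw [e1, Lhat_eq c (A * B)]

set_option maxHeartbeats 2000000 in
lemma commBG (hcc : ∀ j k, c j * c k + c k * c j = 0)
    (hcd : ∀ j k, c j * ContinuousLinearMap.adjoint (c k)
      + ContinuousLinearMap.adjoint (c k) * c j = if j = k then 1 else 0)
    (hdd : ∀ j k, ContinuousLinearMap.adjoint (c j) * ContinuousLinearMap.adjoint (c k)
      + ContinuousLinearMap.adjoint (c k) * ContinuousLinearMap.adjoint (c j) = 0)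
    (A B : Matrix (Fin n) (Fin n) ℂ) :
    Bhat c A * Ghat c B - Ghat c B * Bhat c A = Ghat c (B * A) := by
  have e := comm_expand (fun j k => Er (c k) * Er (adjoint (c j))) (fun j k => El (adjoint (c j)) * Er (c k)) A B
  have e2 := collapse2 A B (fun p k => El (adjoint (c p)) * Er (c k))
  rw [Bhat_eq, Ghat_eq, e]
  have key : ∀ j k p q : Fin n,
      Er (c k) * Er (adjoint (c j)) * (El (adjoint (c p)) * Er (c q))
        - El (adjoint (c p)) * Er (c q) * (Er (c k) * Er (adjoint (c j)))
      = (if q = j then (1:𝒮) else 0) * (El (adjoint (c p)) * Er (c k)) := by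
    intro j k p q
    have h := tmplT6 (mul_ite_comm _ _) (mul_ite_comm _ _) ((ElEr_comm (adjoint (c p)) (adjoint (c j))).symm)
      ((ElEr_comm (adjoint (c p)) (c k)).symm) (Rsr c hcd j q) (Rrr c hcc k q)
    rwa [iteswap j q] at h
  simp only [key]
  rw [e2, Ghat_eq c (B * A)]

set_option maxHeartbeats 2000000 in
lemma commLL (hcc : ∀ j k, c j * c k + c k * c j = 0)
    (hcd : ∀ j k, c j * ContinuousLinearMap.adjoint (c k)
      + ContinuousLinearMap.adjoint (c k) * c j = if j = k then 1 else 0)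
    (hdd : ∀ j k, ContinuousLinearMap.adjoint (c j) * ContinuousLinearMap.adjoint (c k)
      + ContinuousLinearMap.adjoint (c k) * ContinuousLinearMap.adjoint (c j) = 0)
    (A B : Matrix (Fin n) (Fin n) ℂ) :
    Lhat c A * Lhat c B - Lhat c B * Lhat c A = 0 := by
  have e := comm_expand (fun j k => El (c k) * Er (adjoint (c j))) (fun j k => El (c k) * Er (adjoint (c j))) A B
  rw [Lhat_eq, Lhat_eq, e]
  have key : ∀ j k p q : Fin n,
      El (c k) * Er (adjoint (c j)) * (El (c q) * Er (adjoint (c p)))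
        - El (c q) * Er (adjoint (c p)) * (El (c k) * Er (adjoint (c j))) = 0 :=
    fun j k p q => tmplT7 ((ElEr_comm (c q) (adjoint (c j))).symm)
      (ElEr_comm (c k) (adjoint (c p))) (Rll c hcc k q) (Rss c hdd j p)
  simp only [key, smul_zero, Finset.sum_const_zero]

set_option maxHeartbeats 2000000 in
lemma commGG (hcc : ∀ j k, c j * c k + c k * c j = 0)
    (hcd : ∀ j k, c j * ContinuousLinearMap.adjoint (c k)
      + ContinuousLinearMap.adjoint (c k) * c j = if j = k then 1 else 0)
    (hdd : ∀ j k, ContinuousLinearMap.adjoint (c j) * ContinuousLinearMap.adjoint (c k)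
      + ContinuousLinearMap.adjoint (c k) * ContinuousLinearMap.adjoint (c j) = 0)
    (A B : Matrix (Fin n) (Fin n) ℂ) :
    Ghat c A * Ghat c B - Ghat c B * Ghat c A = 0 := by
  have e := comm_expand (fun j k => El (adjoint (c j)) * Er (c k)) (fun j k => El (adjoint (c j)) * Er (c k)) A B
  rw [Ghat_eq, Ghat_eq, e]
  have key : ∀ j k p q : Fin n,
      El (adjoint (c j)) * Er (c k) * (El (adjoint (c p)) * Er (c q))
        - El (adjoint (c p)) * Er (c q) * (El (adjoint (c j)) * Er (c k)) = 0 :=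
    fun j k p q => tmplT7 ((ElEr_comm (adjoint (c p)) (c k)).symm)
      (ElEr_comm (adjoint (c j)) (c q)) (Rdd c hdd j p) (Rrr c hcc k q)
  simp only [key, smul_zero, Finset.sum_const_zero]

set_option maxHeartbeats 2000000 in
lemma commLG (hcc : ∀ j k, c j * c k + c k * c j = 0)
    (hcd : ∀ j k, c j * ContinuousLinearMap.adjoint (c k)
      + ContinuousLinearMap.adjoint (c k) * c j = if j = k then 1 else 0)
    (hdd : ∀ j k, ContinuousLinearMap.adjoint (c j) * ContinuousLinearMap.adjoint (c k)
      + ContinuousLinearMap.adjoint (c k) * ContinuousLinearMap.adjoint (c j) = 0)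
    (A B : Matrix (Fin n) (Fin n) ℂ) :
    Lhat c A * Ghat c B - Ghat c B * Lhat c A
      = (A * B).trace • (1 : 𝒮) - Bhat c (A * B) - Fhat c (B * A) := by
  have e := comm_expand (fun j k => El (c k) * Er (adjoint (c j))) (fun j k => El (adjoint (c j)) * Er (c k)) A B
  have e3 := collapse3 (S := 𝒮) A B
  have e1 := collapse1 A B (fun j q => Er (c q) * Er (adjoint (c j)))
  have e2 := collapse2 A B (fun p k => El (adjoint (c p)) * El (c k))
  rw [Lhat_eq, Ghat_eq, e]
  have key : ∀ j k p q : Fin n,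
      El (c k) * Er (adjoint (c j)) * (El (adjoint (c p)) * Er (c q))
        - El (adjoint (c p)) * Er (c q) * (El (c k) * Er (adjoint (c j)))
      = (if k = p then (1:𝒮) else 0) * (if q = j then (1:𝒮) else 0)
        - (if k = p then (1:𝒮) else 0) * (Er (c q) * Er (adjoint (c j)))
        - (if q = j then (1:𝒮) else 0) * (El (adjoint (c p)) * El (c k)) := by
    intro j k p q
    have h := tmplT8 (mul_ite_comm _ _) (mul_ite_comm _ _) ((ElEr_comm (adjoint (c p)) (adjoint (c j))).symm)
      (ElEr_comm (c k) (c q)) (Rld c hcd k p) (Rsr c hcd j q)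
    rwa [iteswap j q] at h
  simp only [key, smul_sub, Finset.sum_sub_distrib]
  rw [e3, e1, e2, Bhat_eq c (A * B), Fhat_eq c (B * A)]


section Additivity

lemma Lhat_add (X Y : Matrix (Fin n) (Fin n) ℂ) : Lhat c (X + Y) = Lhat c X + Lhat c Y := by
  simp [Lhat, Matrix.add_apply, add_smul, Finset.sum_add_distrib]
lemma Lhat_sub (X Y : Matrix (Fin n) (Fin n) ℂ) : Lhat c (X - Y) = Lhat c X - Lhat c Y := by
  simp [Lhat, Matrix.sub_apply, sub_smul, Finset.sum_sub_distrib]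
lemma Lhat_neg (X : Matrix (Fin n) (Fin n) ℂ) : Lhat c (-X) = -Lhat c X := by
  simp [Lhat, Matrix.neg_apply, neg_smul, Finset.sum_neg_distrib]
lemma Ghat_add (X Y : Matrix (Fin n) (Fin n) ℂ) : Ghat c (X + Y) = Ghat c X + Ghat c Y := by
  simp [Ghat, Matrix.add_apply, add_smul, Finset.sum_add_distrib]
lemma Ghat_sub (X Y : Matrix (Fin n) (Fin n) ℂ) : Ghat c (X - Y) = Ghat c X - Ghat c Y := by
  simp [Ghat, Matrix.sub_apply, sub_smul, Finset.sum_sub_distrib]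
lemma Ghat_neg (X : Matrix (Fin n) (Fin n) ℂ) : Ghat c (-X) = -Ghat c X := by
  simp [Ghat, Matrix.neg_apply, neg_smul, Finset.sum_neg_distrib]
lemma quadOp_add (X Y : Matrix (Fin n) (Fin n) ℂ) :
    quadOp c (X + Y) = quadOp c X + quadOp c Y := by
  simp [quadOp, Matrix.add_apply, add_smul, Finset.sum_add_distrib]
lemma quadOp_sub (X Y : Matrix (Fin n) (Fin n) ℂ) :
    quadOp c (X - Y) = quadOp c X - quadOp c Y := by
  simp [quadOp, Matrix.sub_apply, sub_smul, Finset.sum_sub_distrib]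
lemma quadOp_neg (X : Matrix (Fin n) (Fin n) ℂ) : quadOp c (-X) = -quadOp c X := by
  simp [quadOp, Matrix.neg_apply, neg_smul, Finset.sum_neg_distrib]
lemma Fhat_add (X Y : Matrix (Fin n) (Fin n) ℂ) : Fhat c (X + Y) = Fhat c X + Fhat c Y := by
  simp [Fhat, quadOp_add, map_add]
lemma Fhat_sub (X Y : Matrix (Fin n) (Fin n) ℂ) : Fhat c (X - Y) = Fhat c X - Fhat c Y := by
  simp [Fhat, quadOp_sub, map_sub]
lemma Fhat_neg (X : Matrix (Fin n) (Fin n) ℂ) : Fhat c (-X) = -Fhat c X := by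
  simp [Fhat, quadOp_neg, map_neg]
lemma Bhat_add (X Y : Matrix (Fin n) (Fin n) ℂ) : Bhat c (X + Y) = Bhat c X + Bhat c Y := by
  simp [Bhat, quadOp_add, map_add]
lemma Bhat_sub (X Y : Matrix (Fin n) (Fin n) ℂ) : Bhat c (X - Y) = Bhat c X - Bhat c Y := by
  simp [Bhat, quadOp_sub, map_sub]
lemma Bhat_neg (X : Matrix (Fin n) (Fin n) ℂ) : Bhat c (-X) = -Bhat c X := by
  simp [Bhat, quadOp_neg, map_neg]

end Additivity

lemma flip_comm {G : Type*} [SubtractionCommMonoid G] {x y z : G} (h : x - y = z) :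
    y - x = -z := by rw [← h, neg_sub]

lemma smul_one_central (t : ℂ) (x : 𝒮) : (t • (1 : 𝒮)) * x = x * (t • (1 : 𝒮)) := by
  ext ρ
  simp [ContinuousLinearMap.mul_apply]

lemma assemble {R : Type*} [Ring R] (p1 p2 p3 p4 q1 q2 q3 q4 z w : R)
    (hz : ∀ x, z * x = x * z) (hw : ∀ x, w * x = x * w) :
    (p1 + p2 + p3 + p4 - z) * (q1 + q2 + q3 + q4 - w)
      - (q1 + q2 + q3 + q4 - w) * (p1 + p2 + p3 + p4 - z)
    = (p1*q1 - q1*p1) + (p1*q2 - q2*p1) + (p1*q3 - q3*p1) + (p1*q4 - q4*p1)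
    + (p2*q1 - q1*p2) + (p2*q2 - q2*p2) + (p2*q3 - q3*p2) + (p2*q4 - q4*p2)
    + (p3*q1 - q1*p3) + (p3*q2 - q2*p3) + (p3*q3 - q3*p3) + (p3*q4 - q4*p3)
    + (p4*q1 - q1*p4) + (p4*q2 - q2*p4) + (p4*q3 - q3*p4) + (p4*q4 - q4*p4) := by
  have key : ∀ P Q : R, (P - z) * (Q - w) - (Q - w) * (P - z) = P * Q - Q * P := by
    intro P Q
    simp only [sub_mul, mul_sub]
    rw [hz Q, hz w, hw P]
    abel
  rw [key]
  simp only [add_mul, mul_add]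
  abel

end Stmt3Aux

set_option maxHeartbeats 4000000 in
/-- `[L(A, M), L(B, N)] = L([A, B], AN + NA† − BM − MB†)`. -/
theorem stmt3 {n : ℕ} (hn : 0 < n)
    {F : Type*} [NormedAddCommGroup F] [InnerProductSpace ℂ F] [FiniteDimensional ℂ F]
    (c : Fin n → F →L[ℂ] F)
    (hcc : ∀ j k, c j * c k + c k * c j = 0)
    (hcd : ∀ j k, c j * ContinuousLinearMap.adjoint (c k)
      + ContinuousLinearMap.adjoint (c k) * c j = if j = k then 1 else 0)
    (hdd : ∀ j k, ContinuousLinearMap.adjoint (c j) * ContinuousLinearMap.adjoint (c k)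
      + ContinuousLinearMap.adjoint (c k) * ContinuousLinearMap.adjoint (c j) = 0)
    (A B M N : Matrix (Fin n) (Fin n) ℂ) :
    Liou c A M * Liou c B N - Liou c B N * Liou c A M
      = Liou c (A * B - B * A) (A * N + N * Aᴴ - B * M - M * Bᴴ) := by
  have h11 := commLL c hcc hcd hdd (-A - Aᴴ - M) (-B - Bᴴ - N)
  have h12 := commLG c hcc hcd hdd (-A - Aᴴ - M) N
  have h13 := flip_comm (commFL c hcc hcd hdd (B + N) (-A - Aᴴ - M))
  have h14 := flip_comm (commBL c hcc hcd hdd (Bᴴ + N) (-A - Aᴴ - M))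
  have h21 := flip_comm (commLG c hcc hcd hdd (-B - Bᴴ - N) M)
  have h22 := commGG c hcc hcd hdd M N
  have h23 := flip_comm (commFG c hcc hcd hdd (B + N) M)
  have h24 := flip_comm (commBG c hcc hcd hdd (Bᴴ + N) M)
  have h31 := commFL c hcc hcd hdd (A + M) (-B - Bᴴ - N)
  have h32 := commFG c hcc hcd hdd (A + M) N
  have h33 := commFF c hcc hcd hdd (A + M) (B + N)
  have h34 := commFB c hcc hcd hdd (A + M) (Bᴴ + N)
  have h41 := commBL c hcc hcd hdd (Aᴴ + M) (-B - Bᴴ - N)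
  have h42 := commBG c hcc hcd hdd (Aᴴ + M) N
  have h43 := flip_comm (commFB c hcc hcd hdd (B + N) (Aᴴ + M))
  have h44 := commBB c hcc hcd hdd (Aᴴ + M) (Bᴴ + N)
  simp only [Liou]
  rw [assemble _ _ _ _ _ _ _ _ _ _ (smul_one_central M.trace) (smul_one_central N.trace), h11, h12, h13, h14, h21, h22, h23, h24, h31, h32, h33, h34, h41, h42, h43, h44]
  simp only [Matrix.conjTranspose_add, Matrix.conjTranspose_sub, Matrix.conjTranspose_neg,
    Matrix.conjTranspose_mul, Matrix.conjTranspose_conjTranspose,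
    sub_mul, mul_sub, add_mul, mul_add, neg_mul, mul_neg, neg_neg, neg_add, neg_sub, neg_zero,
    Lhat_add, Lhat_sub, Lhat_neg, Ghat_add, Ghat_sub, Ghat_neg,
    Fhat_add, Fhat_sub, Fhat_neg, Bhat_add, Bhat_sub, Bhat_neg,
    Matrix.trace_add, Matrix.trace_sub, Matrix.trace_neg, add_smul, sub_smul, neg_smul]
  simp only [Matrix.trace_mul_comm Aᴴ N, Matrix.trace_mul_comm N M, Matrix.trace_mul_comm Bᴴ M]
  module
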